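/- Let G be a finite connected simple graph of order n ≥ 2 and size m. Then the matching number of the subdivision graph S(G) satisfies β(S(G)) = min{n, m}. -/

import Mathlib

/-- The subdivision graph `S(G)`: vertices are `V(G) ⊕ E(G)`, with `v ∈ V(G)` adjacent to
`e ∈ E(G)` iff `v` is an endpoint of `e`. -/
def subdivision {V : Type*} (G : SimpleGraph V) : SimpleGraph (V ⊕ G.edgeSet) where
  Adj a b :=
    match a, b with
    | Sum.inl v, Sum.inr e => v ∈ (e : Sym2 V)
    | Sum.inr e, Sum.inl v => v ∈ (e : Sym2 V)
    | _, _ => False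
  symm := by constructor; rintro (v | e) (w | f) h <;> simp_all
  loopless := by constructor; rintro (v | e) h <;> simp_all





lemma exists_parent' {V : Type*} {G : SimpleGraph V} (hconn : G.Connected) (r : V) {v : V}
    (hv : v ≠ r) : ∃ w, G.Adj v w ∧ G.dist r w + 1 = G.dist r v := by
  obtain ⟨p, hp⟩ := (hconn r v).exists_walk_length_eq_dist
  obtain ⟨w, hadj, q', hq'⟩ := SimpleGraph.Walk.exists_eq_cons_of_ne hv p.reverse
  refine ⟨w, hadj, ?_⟩
  have h1 : G.dist r w ≤ q'.length := by
    simpa [SimpleGraph.dist_comm] using SimpleGraph.dist_le q'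
  have hlen : p.reverse.length = G.dist r v := by
    rw [SimpleGraph.Walk.length_reverse, hp]
  have h2 : q'.length + 1 = G.dist r v := by
    rw [hq'] at hlen; simpa using hlen
  have hdw : G.dist w v ≤ 1 := by
    rw [SimpleGraph.dist_comm]
    exact le_of_eq (SimpleGraph.dist_eq_one_iff_adj.mpr hadj)
  have h3 : G.dist r v ≤ G.dist r w + 1 :=
    le_trans (hconn.dist_triangle (u := r) (v := w) (w := v)) (by omega)
  omega

lemma key_lemma {V : Type*} [Fintype V] {G : SimpleGraph V} (hconn : G.Connected)
    (hn : 2 ≤ Fintype.card V) :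
    (∃ r : V, ∃ f : V → Sym2 V, Set.InjOn f {v | v ≠ r} ∧
       ∀ v, v ≠ r → f v ∈ G.edgeSet ∧ v ∈ f v) ∧
    (Fintype.card V ≤ G.edgeSet.ncard →
      ∃ f : V → Sym2 V, Function.Injective f ∧ ∀ v, f v ∈ G.edgeSet ∧ v ∈ f v) := by
  classical
  have hVne : Nonempty V := Fintype.card_pos_iff.mp (by omega)
  obtain ⟨r⟩ := hVne
  have h0 : ∀ v : V, ∃ w, v ≠ r → (G.Adj v w ∧ G.dist r w + 1 = G.dist r v) := by
    intro v
    by_cases hv : v = r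
    · exact ⟨r, fun h => absurd hv h⟩
    · obtain ⟨w, hw⟩ := exists_parent' hconn r hv
      exact ⟨w, fun _ => hw⟩
  choose par hpar using h0
  set p : V → Sym2 V := fun v => s(v, par v) with hp
  have hvp : ∀ v, v ∈ p v := fun v => Sym2.mem_mk_left _ _
  have hmem : ∀ v, v ≠ r → p v ∈ G.edgeSet := fun v hv =>
    (G.mem_edgeSet).mpr (hpar v hv).1
  have hinj : Set.InjOn p {v | v ≠ r} := by
    intro u hu v hv h
    simp only [hp, Sym2.eq, Sym2.rel_iff', Prod.mk.injEq, Prod.swap_prod_mk] at h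
    rcases h with ⟨h1, _⟩ | ⟨h1, h2⟩
    · exact h1
    · exfalso
      have d1 := (hpar u hu).2
      have d2 := (hpar v hv).2
      rw [← h1] at d2
      rw [h2] at d1
      omega
  refine ⟨⟨r, p, hinj, fun v hv => ⟨hmem v hv, hvp v⟩⟩, ?_⟩
  intro hm
  set S : Set (Sym2 V) := p '' {v | v ≠ r} with hS
  have hScard : S.ncard = Fintype.card V - 1 := by
    rw [hS, Set.ncard_image_of_injOn hinj, ← Nat.card_coe_set_eq,
      Nat.card_eq_fintype_card]
    have h := Fintype.card_subtype_compl (fun v : V => v = r)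
    rw [Fintype.card_subtype_eq] at h
    rw [← h]; exact Fintype.card_congr (Equiv.refl _)
  have hex : ∃ e0 ∈ G.edgeSet, e0 ∉ S := by
    by_contra h
    push_neg at h
    have hle := Set.ncard_le_ncard (fun e he => h e he) (S.toFinite)
    omega
  obtain ⟨e0, he0, he0S⟩ := hex
  obtain ⟨⟨a, b⟩, rfl⟩ := Quot.exists_rep e0
  set da := G.dist r a with hda
  set c : ℕ → V := fun i => par^[i] a with hc
  have hc0 : c 0 = a := rfl
  have hcsucc : ∀ i, c (i+1) = par (c i) := fun i => Function.iterate_succ_apply' par i a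
  have hcd : ∀ i, i ≤ da → G.dist r (c i) + i = da := by
    intro i
    induction i with
    | zero => intro _; simp [hc0, hda]
    | succ i ih =>
      intro hi
      have h1 := ih (by omega)
      have hne : c i ≠ r := by
        intro h
        rw [h, SimpleGraph.dist_self] at h1
        omega
      have h2 := (hpar (c i) hne).2
      rw [hcsucc]
      omega
  have hcr : ∀ i, i < da → c i ≠ r := by
    intro i hi h
    have h1 := hcd i (le_of_lt hi)
    rw [h, SimpleGraph.dist_self] at h1
    omega
  have hcinj : ∀ i, i ≤ da → ∀ j, j ≤ da → c i = c j → i = j := by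
    intro i hi j hj h
    have h1 := hcd i hi
    have h2 := hcd j hj
    rw [h] at h1
    omega
  have hrchain : a ≠ r → ∃ i, i < da ∧ c (i+1) = r := by
    intro ha
    have hda0 : 0 < da := hconn.pos_dist_of_ne (fun h => ha h.symm)
    refine ⟨da - 1, by omega, ?_⟩
    have h1 := hcd da (le_refl _)
    have h2 : G.dist r (c da) = 0 := by omega
    have h3 : r = c da := (hconn.dist_eq_zero_iff).mp h2
    rw [show da - 1 + 1 = da from by omega]
    exact h3.symm
  set back : V → V := fun v => if h : ∃ i, i < da ∧ c (i+1) = v then c h.choose else v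
    with hback
  have hback1 : ∀ i, i < da → back (c (i+1)) = c i := by
    intro i hi
    have hex2 : ∃ j, j < da ∧ c (j+1) = c (i+1) := ⟨i, hi, rfl⟩
    rw [hback]
    simp only
    rw [dif_pos hex2]
    have hspec := hex2.choose_spec
    have h1 : hex2.choose + 1 = i + 1 :=
      hcinj _ (by omega) _ (by omega) hspec.2
    have h2 : hex2.choose = i := by omega
    rw [h2]
  have hback2 : ∀ v, ¬ (∃ i, i < da ∧ c (i+1) = v) → back v = v := fun v h => dif_neg h
  have hbackP : ∀ v, v ≠ a → back v ≠ r ∧ v ∈ p (back v) := by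
    intro v hv
    by_cases h : ∃ i, i < da ∧ c (i+1) = v
    · obtain ⟨i, hi, hci⟩ := h
      have hbv : back v = c i := by rw [← hci]; exact hback1 i hi
      rw [hbv]
      refine ⟨hcr i hi, ?_⟩
      show v ∈ s(c i, par (c i))
      rw [← hcsucc, hci]
      exact Sym2.mem_mk_right _ _
    · rw [hback2 v h]
      refine ⟨?_, hvp v⟩
      intro hvr
      apply h
      have ha : a ≠ r := fun ha => hv (hvr.trans ha.symm)
      obtain ⟨i, hi, hci⟩ := hrchain ha
      exact ⟨i, hi, by rw [hci, hvr]⟩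
  set q : V → Sym2 V := fun v => if v = a then s(a, b) else p (back v) with hq
  have hqa : q a = s(a, b) := by rw [hq]; simp
  have hqne : ∀ v, v ≠ a → q v = p (back v) := by
    intro v hv; rw [hq]; simp [hv]
  have hqmem : ∀ v, q v ∈ G.edgeSet ∧ v ∈ q v := by
    intro v
    by_cases hv : v = a
    · subst hv
      rw [hqa]
      exact ⟨he0, Sym2.mem_mk_left _ _⟩
    · rw [hqne v hv]
      obtain ⟨h1, h2⟩ := hbackP v hv
      exact ⟨hmem _ h1, h2⟩
  have hqinj : Function.Injective q := by
    intro u v h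
    by_cases hu : u = a <;> by_cases hv : v = a
    · rw [hu, hv]
    · exfalso
      rw [hu, hqa, hqne v hv] at h
      exact he0S ⟨back v, (hbackP v hv).1, h.symm⟩
    · exfalso
      rw [hv, hqa, hqne u hu] at h
      exact he0S ⟨back u, (hbackP u hu).1, h⟩
    · rw [hqne u hu, hqne v hv] at h
      have hbb : back u = back v := hinj (hbackP u hu).1 (hbackP v hv).1 h
      by_cases h1 : ∃ i, i < da ∧ c (i+1) = u <;>
        by_cases h2 : ∃ i, i < da ∧ c (i+1) = v
      · obtain ⟨i, hi, hci⟩ := h1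
        obtain ⟨j, hj, hcj⟩ := h2
        have e1 : back u = c i := by rw [← hci]; exact hback1 i hi
        have e2 : back v = c j := by rw [← hcj]; exact hback1 j hj
        have hij : i = j := hcinj i (le_of_lt hi) j (le_of_lt hj)
          (by rw [← e1, ← e2, hbb])
        rw [← hci, ← hcj, hij]
      · exfalso
        obtain ⟨i, hi, hci⟩ := h1
        have e1 : back u = c i := by rw [← hci]; exact hback1 i hi
        have e2 : back v = v := hback2 v h2
        have hvc : v = c i := by rw [← e2, ← hbb, e1]
        match i, hvc with
        | 0, hvc => exact hv (by rw [hvc, hc0])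
        | (k+1), hvc => exact h2 ⟨k, by omega, hvc.symm⟩
      · exfalso
        obtain ⟨i, hi, hci⟩ := h2
        have e1 : back v = c i := by rw [← hci]; exact hback1 i hi
        have e2 : back u = u := hback2 u h1
        have hvc : u = c i := by rw [← e2, hbb, e1]
        match i, hvc with
        | 0, hvc => exact hu (by rw [hvc, hc0])
        | (k+1), hvc => exact h1 ⟨k, by omega, hvc.symm⟩
      · rw [← hback2 u h1, ← hback2 v h2, hbb]
  exact ⟨q, hqinj, fun v => ⟨(hqmem v).1, (hqmem v).2⟩⟩


lemma card_ne_sub {V : Type*} [Fintype V] (r : V) :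
    Nat.card {v : V // v ≠ r} = Fintype.card V - 1 := by
  classical
  rw [Nat.card_eq_fintype_card]
  have h := Fintype.card_subtype_compl (fun v : V => v = r)
  rw [Fintype.card_subtype_eq] at h
  simpa using h

lemma matching_of_fun {V : Type*} {G : SimpleGraph V} {α : Type*} (u : α → V)
    (g : α → G.edgeSet) (hu : Function.Injective u) (hg : Function.Injective g)
    (hin : ∀ x, u x ∈ (g x : Sym2 V)) :
    ∃ M : Set (Sym2 (V ⊕ G.edgeSet)), M ⊆ (subdivision G).edgeSet ∧
      (∀ e ∈ M, ∀ f ∈ M, e ≠ f → ∀ x, ¬ (x ∈ e ∧ x ∈ f)) ∧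
      M.ncard = Nat.card α := by
  classical
  set F : α → Sym2 (V ⊕ G.edgeSet) := fun x => s(Sum.inl (u x), Sum.inr (g x)) with hF
  have hFinj : Function.Injective F := by
    intro x y h
    simp only [hF, Sym2.eq, Sym2.rel_iff', Prod.mk.injEq, Prod.swap_prod_mk] at h
    rcases h with ⟨h1, _⟩ | ⟨h1, _⟩
    · exact hu (Sum.inl.inj h1)
    · exact absurd h1 (by simp)
  refine ⟨Set.range F, ?_, ?_, ?_⟩
  · rintro e ⟨x, rfl⟩
    rw [SimpleGraph.mem_edgeSet]
    exact hin x
  · rintro e ⟨x, rfl⟩ f ⟨y, rfl⟩ hne z ⟨hz1, hz2⟩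
    rw [hF] at hz1 hz2
    simp only [Sym2.mem_iff] at hz1 hz2
    rcases hz1 with rfl | rfl <;> rcases hz2 with h | h
    · exact hne (by rw [hF]; rw [hu (Sum.inl.inj h)])
    · exact absurd h (by simp)
    · exact absurd h (by simp)
    · exact hne (by rw [hF]; rw [hg (Sum.inr.inj h)])
  · rw [← Set.image_univ, Set.ncard_image_of_injective _ hFinj, Set.ncard_univ]

/-- For a finite connected simple graph `G` of order `n ≥ 2` and size `m`,
`β(S(G)) = min {n, m}`, i.e. `min {n, m}` is the greatest cardinality of a matching
(a set of pairwise non-incident edges) of `S(G)`. -/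
theorem matchingNum_subdivision {V : Type*} [Fintype V] (G : SimpleGraph V)
    (hconn : G.Connected) (hn : 2 ≤ Fintype.card V) :
    IsGreatest {k : ℕ | ∃ M : Set (Sym2 (V ⊕ G.edgeSet)),
        M ⊆ (subdivision G).edgeSet ∧
        (∀ e ∈ M, ∀ f ∈ M, e ≠ f → ∀ x, ¬ (x ∈ e ∧ x ∈ f)) ∧
        M.ncard = k}
      (min (Fintype.card V) G.edgeSet.ncard) := by
  classical
  obtain ⟨⟨r, f1, hf1inj, hf1⟩, hkey2⟩ := key_lemma hconn hn
  have hm1 : Fintype.card V - 1 ≤ G.edgeSet.ncard := by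
    have himg : f1 '' {v | v ≠ r} ⊆ G.edgeSet := by
      rintro e ⟨v, hv, rfl⟩; exact (hf1 v hv).1
    have hle := Set.ncard_le_ncard himg (G.edgeSet.toFinite)
    rw [Set.ncard_image_of_injOn hf1inj, ← Nat.card_coe_set_eq] at hle
    have : Nat.card {v : V | v ≠ r} = Fintype.card V - 1 := card_ne_sub r
    omega
  have hEne : Nonempty G.edgeSet := by
    obtain ⟨v, hv⟩ := Fintype.exists_ne_of_one_lt_card (by omega) r
    exact ⟨⟨f1 v, (hf1 v hv).1⟩⟩
  constructor
  · -- membership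
    rcases le_or_gt (Fintype.card V) G.edgeSet.ncard with hnm | hnm
    · rw [min_eq_left hnm]
      obtain ⟨f, hfinj, hf⟩ := hkey2 hnm
      obtain ⟨M, h1, h2, h3⟩ := matching_of_fun (G := G) (id : V → V)
        (fun v => ⟨f v, (hf v).1⟩) Function.injective_id
        (fun x y h => hfinj (congrArg Subtype.val h)) (fun v => (hf v).2)
      exact ⟨M, h1, h2, by rw [h3, Nat.card_eq_fintype_card]⟩
    · rw [min_eq_right (le_of_lt hnm)]
      obtain ⟨M, h1, h2, h3⟩ := matching_of_fun (G := G)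
        (fun v : {v : V // v ≠ r} => v.1)
        (fun v : {v : V // v ≠ r} => ⟨f1 v.1, (hf1 v.1 v.2).1⟩)
        (fun x y h => Subtype.ext h)
        (fun x y h => Subtype.ext (hf1inj x.2 y.2 (congrArg Subtype.val h)))
        (fun v => (hf1 v.1 v.2).2)
      refine ⟨M, h1, h2, ?_⟩
      rw [h3, card_ne_sub r]
      omega
  · -- upper bound
    rintro k ⟨M, hME, hMd, rfl⟩
    have hform : ∀ e ∈ M, ∃ v ε, e = s(Sum.inl v, Sum.inr ε) := by
      intro e he
      obtain ⟨⟨x, y⟩, rfl⟩ := Quot.exists_rep e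
      have hadj : (subdivision G).Adj x y := (SimpleGraph.mem_edgeSet _).mp (hME he)
      rcases x with v | ε <;> rcases y with w | δ
      · exact hadj.elim
      · exact ⟨v, δ, rfl⟩
      · exact ⟨w, ε, Sym2.eq_swap⟩
      · exact hadj.elim
    -- injection into V
    set pV : Sym2 (V ⊕ G.edgeSet) → V :=
      fun e => if h : ∃ v, Sum.inl v ∈ e then h.choose else r with hpV
    have hpVmem : ∀ e ∈ M, Sum.inl (pV e) ∈ e := by
      intro e he
      obtain ⟨v, ε, rfl⟩ := hform e he
      have hx : ∃ w, Sum.inl w ∈ s(Sum.inl v, Sum.inr ε) :=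
        ⟨v, Sym2.mem_mk_left _ _⟩
      rw [hpV]
      simp only
      rw [dif_pos hx]
      exact hx.choose_spec
    have hpVinj : Set.InjOn pV M := by
      intro e he e' he' h
      by_contra hne
      exact hMd e he e' he' hne (Sum.inl (pV e)) ⟨hpVmem e he, h ▸ hpVmem e' he'⟩
    -- injection into edges
    set pE : Sym2 (V ⊕ G.edgeSet) → G.edgeSet :=
      fun e => if h : ∃ ε, Sum.inr ε ∈ e then h.choose else Classical.arbitrary _ with hpE
    have hpEmem : ∀ e ∈ M, Sum.inr (pE e) ∈ e := by
      intro e he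
      obtain ⟨v, ε, rfl⟩ := hform e he
      have hx : ∃ δ, Sum.inr δ ∈ s(Sum.inl v, Sum.inr ε) :=
        ⟨ε, Sym2.mem_mk_right _ _⟩
      rw [hpE]
      simp only
      rw [dif_pos hx]
      exact hx.choose_spec
    have hpEinj : Set.InjOn pE M := by
      intro e he e' he' h
      by_contra hne
      exact hMd e he e' he' hne (Sum.inr (pE e)) ⟨hpEmem e he, h ▸ hpEmem e' he'⟩
    refine le_min ?_ ?_
    · calc M.ncard = (pV '' M).ncard := (Set.ncard_image_of_injOn hpVinj).symm
        _ ≤ (Set.univ : Set V).ncard :=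
          Set.ncard_le_ncard (Set.subset_univ _) Set.finite_univ
        _ = Fintype.card V := by rw [Set.ncard_univ, Nat.card_eq_fintype_card]
    · calc M.ncard = (pE '' M).ncard := (Set.ncard_image_of_injOn hpEinj).symm
        _ ≤ (Set.univ : Set G.edgeSet).ncard :=
          Set.ncard_le_ncard (Set.subset_univ _) Set.finite_univ
        _ = G.edgeSet.ncard := by
          rw [Set.ncard_univ, Nat.card_coe_set_eq]
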